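/- arXiv:2001.03858 — 5 statements merged into one kernel-verified Lean document; each statement's English description precedes it below -/
import Mathlib

section
/- Let A be an associative algebra of finite or countable dimension over ℂ with identity, I a two-sided ideal of A, and √I the intersection of all primitive ideals of A containing I. Then for z ∈ A, z ∈ √I if and only if for every a ∈ A there exists k ∈ ℤ_{>0} such that (az)^k ∈ I. -/
open Polynomial

open Polynomial

/-- In any ring, `1 + j` is a unit when `j` lies in the Jacobson radical. -/
theorem isUnit_one_add_of_mem_jacobson_bot {B : Type} [Ring B] {j : B}
    (hj : j ∈ Ideal.jacobson (⊥ : Ideal B)) : IsUnit (1 + j) := by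
  have hleft : ∀ a ∈ Ideal.jacobson (⊥ : Ideal B), ∃ z : B, z * (a + 1) = 1 := by
    intro a ha
    obtain ⟨z, hz⟩ := Ideal.mem_jacobson_iff.mp ha 1
    rw [Ideal.mem_bot, mul_one, sub_eq_zero] at hz
    exact ⟨z, by rw [mul_add, mul_one, hz]⟩
  obtain ⟨z, hz⟩ := hleft j hj
  have hzj : z * j + z = 1 := by rw [← hz, mul_add, mul_one]
  have hz1 : z - 1 ∈ Ideal.jacobson (⊥ : Ideal B) := by
    have hmem : z * j ∈ Ideal.jacobson (⊥ : Ideal B) := by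
      simpa [smul_eq_mul] using (Ideal.jacobson (⊥ : Ideal B)).smul_mem z hj
    have : z - 1 = -(z * j) := by rw [← hzj]; abel
    rw [this]
    exact neg_mem hmem
  obtain ⟨w, hw⟩ := hleft (z - 1) hz1
  rw [sub_add_cancel] at hw
  have hwz : w = j + 1 := by
    calc w = w * (z * (j + 1)) := by rw [hz, mul_one]
    _ = w * z * (j + 1) := (mul_assoc _ _ _).symm
    _ = j + 1 := by rw [hw, one_mul]
  refine isUnit_iff_exists.mpr ⟨z, ?_, ?_⟩
  · rw [add_comm, ← hwz]; exact hw
  · rw [add_comm]; exact hz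

/-- Amitsur's trick: in a ℂ-algebra of at most countable dimension, every element of
the Jacobson radical is nilpotent. -/
theorem amitsur_nilpotent {B : Type} [Ring B] [Algebra ℂ B]
    (hdim : Module.rank ℂ B ≤ Cardinal.aleph0) (x : B)
    (hx : x ∈ Ideal.jacobson (⊥ : Ideal B)) : ∃ m : ℕ, x ^ m = 0 := by
  classical
  -- resolvents are units
  have hunit : ∀ l : {l : ℂ // l ≠ 0}, IsUnit (x - algebraMap ℂ B l) := by
    rintro ⟨l, hl⟩
    have hj : algebraMap ℂ B (-l)⁻¹ * x ∈ Ideal.jacobson (⊥ : Ideal B) := by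
      simpa [smul_eq_mul] using
        (Ideal.jacobson (⊥ : Ideal B)).smul_mem (algebraMap ℂ B (-l)⁻¹) hx
    have h1 : IsUnit (1 + algebraMap ℂ B (-l)⁻¹ * x) := isUnit_one_add_of_mem_jacobson_bot hj
    have h2 : IsUnit (algebraMap ℂ B (-l)) :=
      (isUnit_iff_ne_zero.mpr (neg_ne_zero.mpr hl)).map (algebraMap ℂ B)
    have key : algebraMap ℂ B (-l) * (1 + algebraMap ℂ B (-l)⁻¹ * x)
        = x - algebraMap ℂ B l := by
      rw [mul_add, mul_one, ← mul_assoc, ← map_mul,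
        mul_inv_cancel₀ (neg_ne_zero.mpr hl), map_one, one_mul, map_neg, neg_add_eq_sub]
    exact key ▸ h2.mul h1
  set u : {l : ℂ // l ≠ 0} → B := fun i => ↑(hunit i).unit⁻¹ with hu
  have hui : ∀ i, u i * (x - algebraMap ℂ B i) = 1 := by
    intro i
    have := (hunit i).val_inv_mul
    simp [hu, (hunit i).unit_spec]
  -- linear dependence
  have hnli : ¬ LinearIndependent ℂ u := by
    intro h
    have hcard := h.cardinal_le_rank.trans hdim
    have hcnt : Countable {l : ℂ // l ≠ 0} := Cardinal.mk_le_aleph0_iff.mp hcard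
    have hCc : Countable ℂ := by
      have hsurj : Function.Surjective
          (fun o : Option {l : ℂ // l ≠ 0} => o.elim 0 (fun i => (i : ℂ))) := by
        intro c
        by_cases hc : c = 0
        · exact ⟨none, hc.symm⟩
        · exact ⟨some ⟨c, hc⟩, rfl⟩
      exact hsurj.countable
    have : Countable ℝ := Complex.ofReal_injective.countable
    exact not_countable this
  rw [linearIndependent_iff'] at hnli
  push_neg at hnli
  obtain ⟨s, g, hsum, i₀, hi₀s, hgi₀⟩ := hnli
  -- build the polynomial
  set p : ℂ[X] := ∑ i ∈ s, C (g i) * ∏ j ∈ s.erase i, (X - C (j : ℂ)) with hp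
  have haev : aeval x p = 0 := by
    have hmul := congrArg (· * aeval x (∏ j ∈ s, (X - C (j : ℂ)))) hsum
    simp only [Finset.sum_mul, zero_mul, smul_mul_assoc] at hmul
    have hterm : ∀ i ∈ s, u i * aeval x (∏ j ∈ s, (X - C (j : ℂ)))
        = aeval x (∏ j ∈ s.erase i, (X - C (j : ℂ))) := by
      intro i hi
      rw [← Finset.mul_prod_erase s _ hi, map_mul, ← mul_assoc, map_sub, aeval_X, aeval_C,
        hui, one_mul]
    rw [Finset.sum_congr rfl (fun i hi => by rw [hterm i hi])] at hmul
    rw [hp, map_sum, ← hmul]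
    exact Finset.sum_congr rfl fun i hi => by rw [map_mul, aeval_C, Algebra.smul_def]
  have hpne : p ≠ 0 := by
    intro h0
    have heval : p.eval (i₀ : ℂ) = g i₀ * ∏ j ∈ s.erase i₀, ((i₀ : ℂ) - j) := by
      rw [hp, eval_finset_sum]
      rw [Finset.sum_eq_single i₀]
      · simp [eval_prod]
      · intro i hi hne
        simp only [eval_mul, eval_C, eval_prod, eval_sub, eval_X]
        rw [Finset.prod_eq_zero (Finset.mem_erase.mpr ⟨hne.symm, hi₀s⟩) (by simp)]
        exact mul_zero _
      · intro h; exact absurd hi₀s h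
    have : p.eval (i₀ : ℂ) ≠ 0 := by
      rw [heval]
      refine mul_ne_zero hgi₀ (Finset.prod_ne_zero_iff.mpr fun j hj => ?_)
      have : (j : ℂ) ≠ (i₀ : ℂ) :=
        fun h => (Finset.mem_erase.mp hj).1 (Subtype.coe_injective h)
      exact sub_ne_zero.mpr (Ne.symm this)
    rw [h0] at this; simp at this
  -- factor out powers of X
  obtain ⟨q, hq, hnd⟩ := p.exists_eq_pow_rootMultiplicity_mul_and_not_dvd hpne 0
  rw [map_zero, sub_zero] at hq hnd
  set m := p.rootMultiplicity 0 with hm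
  have hc0 : q.coeff 0 ≠ 0 := fun h => hnd (X_dvd_iff.mpr h)
  have hxq : x ^ m * aeval x q = 0 := by
    have h := haev
    rw [hq, map_mul, map_pow, aeval_X] at h
    exact h
  -- aeval x q is a unit
  have hq' : aeval x q = aeval x q.divX * x + algebraMap ℂ B (q.coeff 0) := by
    conv_lhs => rw [← q.divX_mul_X_add]
    rw [map_add, map_mul, aeval_X, aeval_C]
  have hjmem : algebraMap ℂ B (q.coeff 0)⁻¹ * aeval x q.divX * x
      ∈ Ideal.jacobson (⊥ : Ideal B) := by
    have := (Ideal.jacobson (⊥ : Ideal B)).smul_mem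
      (algebraMap ℂ B (q.coeff 0)⁻¹ * aeval x q.divX) hx
    simpa [smul_eq_mul, mul_assoc] using this
  have hunit1 : IsUnit (1 + algebraMap ℂ B (q.coeff 0)⁻¹ * aeval x q.divX * x) :=
    isUnit_one_add_of_mem_jacobson_bot hjmem
  have hqu : IsUnit (aeval x q) := by
    have hkey : algebraMap ℂ B (q.coeff 0)
        * (1 + algebraMap ℂ B (q.coeff 0)⁻¹ * aeval x q.divX * x) = aeval x q := by
      rw [mul_add, mul_one, ← mul_assoc, ← mul_assoc, ← map_mul,
        mul_inv_cancel₀ hc0, map_one, one_mul, hq', add_comm]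
    rw [← hkey]
    exact ((isUnit_iff_ne_zero.mpr hc0).map (algebraMap ℂ B)).mul hunit1
  have hxm : x ^ m = 0 := by
    have h0 : x ^ m * aeval x q = 0 * aeval x q := by rw [hxq, zero_mul]
    exact hqu.mul_right_cancel h0
  exact ⟨m, hxm⟩


/-- Let `A` be an associative unital ℂ-algebra of finite or countable dimension,
`I` a two-sided ideal of `A`.  An element `z` lies in `√I`, the intersection of all
primitive ideals of `A` containing `I` (equivalently, `z` annihilates every simple
left `A`-module annihilated by `I`), if and only if for every `a ∈ A` there exists
`k ∈ ℤ_{>0}` with `(a*z)^k ∈ I`. -/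
theorem mem_jacobson_radical_iff_pow
    {A : Type} [Ring A] [Algebra ℂ A]
    (hdim : Module.rank ℂ A ≤ Cardinal.aleph0)
    (I : TwoSidedIdeal A) (z : A) :
    (∀ (M : Type) (_ : AddCommGroup M) (_ : Module A M),
        IsSimpleModule A M → (∀ x ∈ I, ∀ m : M, x • m = 0) → ∀ m : M, z • m = 0) ↔
    (∀ a : A, ∃ k : ℕ, 0 < k ∧ (a * z) ^ k ∈ I) := by

  classical
  constructor
  · -- hard direction
    intro h a
    set B := I.ringCon.Quotient with hB
    set π : A →+* B := I.ringCon.mk' with hπ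
    have hsurj : Function.Surjective π := fun b => Quotient.inductionOn' b fun a => ⟨a, rfl⟩
    have hker : ∀ y : A, π y = 0 ↔ y ∈ I := by
      intro y
      have : π y = π 0 ↔ I.ringCon y 0 := RingCon.eq I.ringCon
      rw [map_zero] at this
      rw [this]
      exact Iff.rfl
    letI : Module ℂ B :=
      Function.Surjective.module ℂ π.toAddMonoidHom hsurj (fun c x => rfl)
    letI : Algebra ℂ B := Algebra.ofModule
      (by
        rintro r x y
        obtain ⟨x, rfl⟩ := hsurj x
        obtain ⟨y, rfl⟩ := hsurj y
        show (π (r • x)) * π y = r • (π x * π y)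
        rw [← map_mul, smul_mul_assoc]
        exact rfl)
      (by
        rintro r x y
        obtain ⟨x, rfl⟩ := hsurj x
        obtain ⟨y, rfl⟩ := hsurj y
        show (π x) * π (r • y) = r • (π x * π y)
        rw [← map_mul, mul_smul_comm]
        exact rfl)
    have hrank : Module.rank ℂ B ≤ Cardinal.aleph0 := by
      refine le_trans (LinearMap.rank_le_of_surjective
        { toFun := π, map_add' := fun x y => map_add π x y,
          map_smul' := fun c x => rfl } hsurj) hdim
    -- z maps into the Jacobson radical of B
    have hzJ : π z ∈ Ideal.jacobson (⊥ : Ideal B) := by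
      rw [Ideal.jacobson]
      refine Submodule.mem_sInf.mpr ?_
      rintro m ⟨-, hm⟩
      letI modA : Module A (B ⧸ m) := Module.compHom _ π
      have hsmul : ∀ (a' : A) (x : B ⧸ m), a' • x = (π a') • x := fun _ _ => rfl
      have hsimpleB : IsSimpleModule B (B ⧸ m) :=
        isSimpleModule_iff_isCoatom.mpr (Ideal.isMaximal_def.mp hm)
      -- transfer submodules
      have hsimpleA : IsSimpleModule A (B ⧸ m) := by
        haveI : Nontrivial (B ⧸ m) := IsSimpleModule.nontrivial B (B ⧸ m)
        refine IsSimpleModule.mk (toIsSimpleOrder := { eq_bot_or_eq_top := ?_ })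
        intro S
        let S' : Submodule B (B ⧸ m) :=
          { carrier := S
            add_mem' := fun hx hy => S.add_mem hx hy
            zero_mem' := S.zero_mem
            smul_mem' := by
              rintro b x hx
              obtain ⟨a', rfl⟩ := hsurj b
              exact S.smul_mem a' hx }
        have hmem : ∀ x : B ⧸ m, x ∈ S' ↔ x ∈ S := fun _ => Iff.rfl
        rcases eq_bot_or_eq_top S' with h' | h'
        · left
          rw [Submodule.eq_bot_iff] at h' ⊢
          exact fun x hx => h' x ((hmem x).mpr hx)
        · right
          rw [Submodule.eq_top_iff'] at h' ⊢
          exact fun x => (hmem x).mp (h' x)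
      have hann : ∀ x ∈ I, ∀ mm : B ⧸ m, x • mm = 0 := by
        intro x hx mm
        rw [hsmul, (hker x).mpr hx, zero_smul]
      have hz0 := h (B ⧸ m) inferInstance modA hsimpleA hann (Submodule.Quotient.mk 1)
      change π z • (Submodule.Quotient.mk 1 : B ⧸ m) = 0 at hz0
      rw [← Submodule.Quotient.mk_smul, smul_eq_mul, mul_one,
        Submodule.Quotient.mk_eq_zero] at hz0
      exact hz0
    have haxJ : π (a * z) ∈ Ideal.jacobson (⊥ : Ideal B) := by
      rw [map_mul]
      simpa [smul_eq_mul] using (Ideal.jacobson (⊥ : Ideal B)).smul_mem (π a) hzJ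
    obtain ⟨mn, hmn⟩ := amitsur_nilpotent hrank (π (a * z)) haxJ
    refine ⟨mn + 1, Nat.succ_pos mn, ?_⟩
    rw [← hker]
    rw [map_pow, pow_succ, hmn, zero_mul]
  · -- easy direction
    intro h M _ _ hsimple hann m
    by_contra hz
    have h1 : Submodule.span A {z • m} = ⊤ := by
      rcases hsimple.1.2 (Submodule.span A {z • m}) with h' | h'
      · exact absurd (Submodule.span_singleton_eq_bot.mp h') hz
      · exact h'
    have hm : m ∈ Submodule.span A {z • m} := h1 ▸ Submodule.mem_top
    obtain ⟨a, ha⟩ := Submodule.mem_span_singleton.mp hm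
    have hk : ∀ k : ℕ, (a * z) ^ k • m = m := by
      intro k
      induction k with
      | zero => simp
      | succ n ih =>
        rw [pow_succ, mul_smul, mul_smul, ha, ih]
    obtain ⟨k, hk0, hkI⟩ := h a
    have h0 := hann _ hkI m
    rw [hk k] at h0
    exact hz (by rw [h0, smul_zero])
end

section
/- Let λ, μ be admissible tuples with #μ − #λ = 1 and μ > λ, and let k ∈ ℤ. Then R(μ,k) > R(λ,k), where R(ν,k) is the tuple obtained from ν by replacing with k the entry at the rightmost admissible insertion position (i.e., replacing ν_{i+1} by k where i+1 is maximal with k ≥ ν_{i+1}), and R(ν,k) = ν if k < ν_{#ν}. -/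
/-- An admissible tuple: weakly decreasing with nonnegative integer entries. -/
def Adm {n : ℕ} (l : Fin n → ℤ) : Prop :=
  (∀ i j : Fin n, i ≤ j → l j ≤ l i) ∧ ∀ i, 0 ≤ l i

/-- One-step Gelfand–Tsetlin branching (sp-rule): `μ > λ`, witnessed by an
interlacing tuple `ν` with
`μ₁ ≥ ν₁ ≥ μ₂ ≥ ν₂ ≥ … ≥ μ_{n+1} ≥ ν_{n+1} ≥ 0` and
`ν₁ ≥ λ₁ ≥ ν₂ ≥ … ≥ ν_n ≥ λ_n ≥ ν_{n+1} ≥ 0`. -/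
def Step {n : ℕ} (μ : Fin (n + 1) → ℤ) (l : Fin n → ℤ) : Prop :=
  ∃ ν : Fin (n + 1) → ℤ,
    (∀ i, 0 ≤ ν i) ∧
    (∀ i : Fin (n + 1), ν i ≤ μ i) ∧
    (∀ i : Fin n, μ i.succ ≤ ν i.castSucc) ∧
    (∀ i : Fin n, l i ≤ ν i.castSucc) ∧
    (∀ i : Fin n, ν i.succ ≤ l i)

/-- `Chain μ λ` : there is a chain of admissible tuples from `μ` down to `λ`,
each consecutive pair related by a one-step branching (`μ ≻ λ`). -/
inductive Chain : ∀ {m n : ℕ}, (Fin m → ℤ) → (Fin n → ℤ) → Prop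
  | refl {n} (l : Fin n → ℤ) : Chain l l
  | step {m n} {μ : Fin (m + 1) → ℤ} {l : Fin m → ℤ} {k : Fin n → ℤ} :
      Adm μ → Adm l → Step μ l → Chain l k → Chain μ k
open scoped Classical in
/-- `Rins ν k` replaces with `k` the entry of `ν` at the (unique) insertion
position coming from the `R`-operation: the first index `j` with `ν j ≤ k`
(so that the prefix `ν₁,…,ν_i` with `ν_i > k` is kept).  If no such index
exists (i.e. `k < ν_m`), then `Rins ν k = ν`. -/
noncomputable def Rins {m : ℕ} (ν : Fin m → ℤ) (k : ℤ) : Fin m → ℤ :=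
  fun j => if ν j ≤ k ∧ ∀ i : Fin m, i < j → k < ν i then k else ν j

open scoped Classical in
/-- `Lins ν k` replaces with `k` the entry of `ν` at the insertion position of
the `L`-operation: the last index `j` with `k ≤ ν j`.  If no such index exists
(i.e. `k > ν₁`), then `Lins ν k = ν`. -/
noncomputable def Lins {m : ℕ} (ν : Fin m → ℤ) (k : ℤ) : Fin m → ℤ :=
  fun j => if k ≤ ν j ∧ ∀ i : Fin m, j < i → ν i < k then k else ν j

/-- If `μ > λ` is a one-step branching of admissible tuples and `k ∈ ℤ`, then
`R(μ,k) > R(λ,k)`. -/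
theorem Rins_step {n : ℕ} (lam : Fin n → ℤ) (μ : Fin (n + 1) → ℤ)
    (hl : Adm lam) (hμ : Adm μ) (h : Step μ lam) (k : ℤ) :
    Step (Rins μ k) (Rins lam k) := by
  obtain ⟨ν, h0, h1, h2, h3, h4⟩ := h
  refine ⟨Rins ν k, ?_, ?_, ?_, ?_, ?_⟩
  · intro i
    unfold Rins
    split_ifs with hc
    · exact le_trans (h0 i) hc.1
    · exact h0 i
  · intro i
    unfold Rins
    split_ifs with hc ha ha
    · exact le_refl k
    · -- hc : Pν i, ¬ ha : Pμ i; goal k ≤ μ i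
      push_neg at ha
      by_cases hik : μ i ≤ k
      · obtain ⟨j, hj, hjk⟩ := ha hik
        exact absurd (hc.2 j hj) (by linarith [h1 j])
      · linarith
    · exact le_trans (h1 i) ha.1
    · exact h1 i
  · intro i
    unfold Rins
    split_ifs with ha hc hc
    · exact le_refl k
    · -- ha : Pμ i.succ, ¬Pν i.castSucc ; goal k ≤ ν i.castSucc
      push_neg at hc
      by_cases hik : ν i.castSucc ≤ k
      · obtain ⟨j, hj, hjk⟩ := hc hik
        have hjv : (j : ℕ) < (i : ℕ) := hj
        have hjn : (j : ℕ) < n := Nat.lt_trans hjv i.isLt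
        have h1' : k < μ (Fin.succ ⟨j, hjn⟩) := ha.2 _ (by
          simp only [Fin.lt_def, Fin.val_succ]
          omega)
        have h2' := h2 ⟨j, hjn⟩
        have hje : Fin.castSucc (⟨j, hjn⟩ : Fin n) = j := rfl
        rw [hje] at h2'
        linarith
      · linarith
    · exact le_trans (h2 i) hc.1
    · exact h2 i
  · intro i
    unfold Rins
    split_ifs with hb hc hc
    · exact le_refl k
    · push_neg at hc
      by_cases hik : ν i.castSucc ≤ k
      · obtain ⟨j, hj, hjk⟩ := hc hik
        have hjv : (j : ℕ) < (i : ℕ) := hj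
        have hjn : (j : ℕ) < n := Nat.lt_trans hjv i.isLt
        have h1' : k < lam ⟨j, hjn⟩ := hb.2 _ hjv
        have h3' := h3 ⟨j, hjn⟩
        have hje : Fin.castSucc (⟨j, hjn⟩ : Fin n) = j := rfl
        rw [hje] at h3'
        linarith
      · linarith
    · exact le_trans (h3 i) hc.1
    · exact h3 i
  · intro i
    unfold Rins
    split_ifs with hc hb hb
    · exact le_refl k
    · push_neg at hb
      by_cases hik : lam i ≤ k
      · obtain ⟨j, hj, hjk⟩ := hb hik
        have h1' : k < ν j.succ := hc.2 j.succ (by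
          simp only [Fin.lt_def, Fin.val_succ] at hj ⊢
          omega)
        have h4' := h4 j
        linarith
      · linarith
    · exact le_trans (h4 i) hb.1
    · exact h4 i
end

section
/- Let w be a permutation of a finite totally ordered set and let l be the length of the longest strictly decreasing subsequence of the sequence (w(x))_{x}. If k is the number of positions i > 0 with w(i) > 0 in the signed-permutation setting (w(−i) = −w(i) on indices {−n,…,−1,1,…,n}), then l ≤ 2n − k, since a decreasing subsequence cannot contain both w(i) and w(−i) when w(i) < 0 < i. -/
/-- For a signed permutation `w` of `{−n,…,−1,1,…,n}` (so `w(−i) = −w(i)`),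
let `k = #{i > 0 : w(i) > 0}`.  Then every strictly decreasing subsequence of the
sequence `(w(−n), …, w(−1), w(1), …, w(n))` has length at most `2n − k`. -/
theorem decreasing_subsequence_bound
    (n : ℕ) (w : ℤ → ℤ)
    (hodd : ∀ j, w (-j) = - w j)
    (hbij : Set.BijOn w {j : ℤ | j ≠ 0 ∧ |j| ≤ (n : ℤ)} {j : ℤ | j ≠ 0 ∧ |j| ≤ (n : ℤ)})
    (l : ℕ) (x : Fin l → ℤ)
    (hx : ∀ t, x t ≠ 0 ∧ |x t| ≤ (n : ℤ))
    (hmono : StrictMono x)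
    (hdec : ∀ s t : Fin l, s < t → w (x t) < w (x s)) :
    l ≤ 2 * n - ((Finset.Icc (1 : ℤ) (n : ℤ)).filter fun i => 0 < w i).card := by
  classical
  have hinj : Function.Injective x := hmono.injective
  have hmem : ∀ t : Fin l, |x t| ∈ Finset.Icc (1 : ℤ) (n : ℤ) := by
    intro t
    rcases hx t with ⟨h1, h2⟩
    have : 1 ≤ |x t| := Int.one_le_abs h1
    rw [Finset.mem_Icc]
    exact ⟨this, h2⟩
  have hcard : (Finset.univ : Finset (Fin l)).card
      = ∑ i ∈ Finset.Icc (1 : ℤ) (n : ℤ),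
        (Finset.univ.filter fun t => |x t| = i).card :=
    Finset.card_eq_sum_card_fiberwise (fun t _ => hmem t)
  have hfiber : ∀ i ∈ Finset.Icc (1 : ℤ) (n : ℤ),
      (Finset.univ.filter fun t => |x t| = i).card
        + (if 0 < w i then 1 else 0) ≤ 2 := by
    intro i hi
    rw [Finset.mem_Icc] at hi
    have hipos : 0 < i := hi.1
    by_cases hw : 0 < w i
    · simp only [hw, if_true]
      have key : ∀ a b : Fin l, a < b → |x a| = i → |x b| = i → False := by
        intro a b hab ha hb
        have hlt : x a < x b := hmono hab
        rcases abs_eq_abs.mp (ha.trans hb.symm) with h | h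
        · exact absurd h (ne_of_lt hlt)
        · have hb0 : 0 < x b := by omega
          have hxb : x b = i := by rwa [abs_of_pos hb0] at hb
          have hxa : x a = -i := by rw [h, hxb]
          have hd := hdec a b hab
          rw [hxa, hxb, hodd i] at hd
          omega
      have h1 : (Finset.univ.filter fun t => |x t| = i).card ≤ 1 := by
        apply Finset.card_le_one.mpr
        intro a ha b hb
        simp only [Finset.mem_filter] at ha hb
        rcases lt_trichotomy a b with h | h | h
        · exact absurd (key a b h ha.2 hb.2) (fun hf => hf)
        · exact h
        · exact absurd (key b a h hb.2 ha.2) (fun hf => hf)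
      omega
    · simp only [hw, if_false]
      have h2 : (Finset.univ.filter fun t => |x t| = i).card
          ≤ ({i, -i} : Finset ℤ).card := by
        apply Finset.card_le_card_of_injOn x
        · intro a ha
          simp only [Finset.mem_coe, Finset.mem_filter] at ha
          rcases (abs_eq hipos.le).mp ha.2 with h | h <;> simp [h]
        · exact fun a _ b _ h => hinj h
      have h3 : ({i, -i} : Finset ℤ).card ≤ 2 :=
        (Finset.card_insert_le _ _).trans (by simp)
      omega
  have hk : ((Finset.Icc (1 : ℤ) (n : ℤ)).filter fun i => 0 < w i).card
      = ∑ i ∈ Finset.Icc (1 : ℤ) (n : ℤ), (if 0 < w i then 1 else 0) :=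
    Finset.card_filter _ _
  have hsum : l + ((Finset.Icc (1 : ℤ) (n : ℤ)).filter fun i => 0 < w i).card
      ≤ 2 * n := by
    have hl : l = (Finset.univ : Finset (Fin l)).card := by simp
    rw [hl, hcard, hk, ← Finset.sum_add_distrib]
    calc ∑ i ∈ Finset.Icc (1 : ℤ) (n : ℤ),
          ((Finset.univ.filter fun t => |x t| = i).card + (if 0 < w i then 1 else 0))
        ≤ ∑ _i ∈ Finset.Icc (1 : ℤ) (n : ℤ), 2 := Finset.sum_le_sum hfiber
      _ = 2 * n := by
          rw [Finset.sum_const, Int.card_Icc]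
          simp [mul_comm]
  omega
end

section
/- The shape of the insertion tableau produced by the Robinson–Schensted algorithm applied to a permutation δ ∈ S_n equals the shape of the insertion tableau applied to δ⁻¹. -/
open scoped Classical

/-- lex order on pairs, for sorting point sets by first coordinate -/
def lexLE (p q : ℕ × ℕ) : Prop := p.1 < q.1 ∨ (p.1 = q.1 ∧ p.2 ≤ q.2)

instance : DecidableRel lexLE := fun p q => by unfold lexLE; infer_instance
instance : IsTrans (ℕ × ℕ) lexLE := ⟨by intro a b c h1 h2; unfold lexLE at *; omega⟩
instance : IsAntisymm (ℕ × ℕ) lexLE := ⟨by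
  intro a b h1 h2
  have : a.1 = b.1 ∧ a.2 = b.2 := by unfold lexLE at *; omega
  exact Prod.ext this.1 this.2⟩
instance : IsTotal (ℕ × ℕ) lexLE := ⟨by intro a b; unfold lexLE; omega⟩

noncomputable def sortF (P : Finset (ℕ × ℕ)) : List (ℕ × ℕ) := P.sort lexLE

noncomputable def wordOf (P : Finset (ℕ × ℕ)) : List ℕ := (sortF P).map Prod.snd

/-- validity: coordinates pairwise distinct -/
def ValidP (P : Finset (ℕ × ℕ)) : Prop :=
  (∀ p ∈ P, ∀ q ∈ P, p.1 = q.1 → p = q) ∧ (∀ p ∈ P, ∀ q ∈ P, p.2 = q.2 → p = q)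

lemma mem_sortF {P : Finset (ℕ × ℕ)} {a} : a ∈ sortF P ↔ a ∈ P := Finset.mem_sort _

lemma sortF_sorted (P : Finset (ℕ × ℕ)) : List.Pairwise lexLE (sortF P) := Finset.pairwise_sort _ _

lemma sortF_nodup (P : Finset (ℕ × ℕ)) : (sortF P).Nodup := Finset.sort_nodup _ _

/-- for a valid-fst set, the sorted list is strictly increasing in fst -/
lemma sortF_pairwise_fst {P : Finset (ℕ × ℕ)}
    (hP : ∀ p ∈ P, ∀ q ∈ P, p.1 = q.1 → p = q) :
    (sortF P).Pairwise (fun a b => a.1 < b.1) := by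
  have h := sortF_sorted P
  have hn := sortF_nodup P
  refine List.Pairwise.imp_of_mem ?_ (List.Pairwise.and h hn)
  intro a b ha hb hab
  rcases hab.1 with h1 | h1
  · exact h1
  · exact absurd (hP a (mem_sortF.mp ha) b (mem_sortF.mp hb) h1.1) hab.2

/-- a strictly-fst-sorted list with the right member set is THE sorted list -/
lemma sortF_eq {P : Finset (ℕ × ℕ)} {l : List (ℕ × ℕ)}
    (hl : l.Pairwise (fun a b => a.1 < b.1))
    (hm : ∀ a, a ∈ l ↔ a ∈ P) : sortF P = l := by
  have hnod : l.Nodup := hl.imp (fun {a b} h => by intro e; rw [e] at h; omega)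
  have hperm : List.Perm (sortF P) l := by
    rw [List.perm_ext_iff_of_nodup (sortF_nodup P) hnod]
    intro a; rw [mem_sortF, hm]
  refine List.Perm.eq_of_pairwise' (sortF_sorted P) ?_ hperm
  exact hl.imp (fun {a b} h => Or.inl h)

/-- splitting lemma : extending the time horizon by one step -/
lemma wordOf_filter_succ_of_not {Q : Finset (ℕ × ℕ)} {t : ℕ}
    (h : ∀ a ∈ Q, a.1 ≠ t) :
    wordOf (Q.filter (fun a => a.1 < t + 1)) = wordOf (Q.filter (fun a => a.1 < t)) := by
  congr 1
  ext a
  simp only [Finset.mem_filter]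
  constructor
  · rintro ⟨ha, h2⟩
    refine ⟨ha, ?_⟩
    have := h a ha
    omega
  · rintro ⟨ha, h2⟩
    exact ⟨ha, by omega⟩

lemma wordOf_filter_succ {Q : Finset (ℕ × ℕ)} {t : ℕ} {e : ℕ × ℕ}
    (hQ : ∀ p ∈ Q, ∀ q ∈ Q, p.1 = q.1 → p = q)
    (he : e ∈ Q) (het : e.1 = t) :
    wordOf (Q.filter (fun a => a.1 < t + 1)) =
      wordOf (Q.filter (fun a => a.1 < t)) ++ [e.2] := by
  have key : sortF (Q.filter (fun a => a.1 < t + 1)) =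
      sortF (Q.filter (fun a => a.1 < t)) ++ [e] := by
    have h1 : ∀ p ∈ Q.filter (fun a => a.1 < t), ∀ q ∈ Q.filter (fun a => a.1 < t),
        p.1 = q.1 → p = q := by
      intro p hp q hq
      exact hQ p (Finset.mem_filter.mp hp).1 q (Finset.mem_filter.mp hq).1
    refine sortF_eq ?_ ?_
    · rw [List.pairwise_append]
      refine ⟨sortF_pairwise_fst h1, List.pairwise_singleton _ _, ?_⟩
      intro a ha b hb
      have := (Finset.mem_filter.mp (mem_sortF.mp ha)).2
      simp only [List.mem_singleton] at hb
      subst hb; omega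
    · intro a
      simp only [List.mem_append, List.mem_singleton, mem_sortF, Finset.mem_filter]
      constructor
      · rintro (⟨ha, h2⟩ | rfl)
        · exact ⟨ha, by omega⟩
        · exact ⟨he, by omega⟩
      · rintro ⟨ha, h2⟩
        by_cases hc : a.1 = t
        · right; exact hQ a ha e he (by omega)
        · left; exact ⟨ha, by omega⟩
  unfold wordOf
  rw [key, List.map_append]
  rfl
/-- Row insertion of `x` into a row `r` (entries weakly increasing): returns the
new row and the bumped entry, if any. -/
def insRow : List ℕ → ℕ → List ℕ × Option ℕ
  | [], x => ([x], none)
  | y :: ys, x =>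
    if y ≤ x then
      let p := insRow ys x
      (y :: p.1, p.2)
    else (x :: ys, some y)

/-- Robinson–Schensted insertion of an entry into a tableau (list of rows). -/
def insTab : List (List ℕ) → ℕ → List (List ℕ)
  | [], x => [[x]]
  | r :: rs, x =>
    match insRow r x with
    | (r', none) => r' :: rs
    | (r', some y) => r' :: insTab rs y

/-- The insertion tableau of the Robinson–Schensted algorithm applied to a
sequence. -/
def RSinsertion (l : List ℕ) : List (List ℕ) := l.foldl insTab []

/-- The shape of a tableau: the list of its row lengths. -/
def shape (t : List (List ℕ)) : List ℕ := t.map List.length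

def bstep (s : List ℕ × List ℕ) (x : ℕ) : List ℕ × List ℕ :=
  ((insRow s.1 x).1, s.2 ++ (insRow s.1 x).2.toList)

lemma countP_sorted {x : ℕ} : ∀ {row : List ℕ}, row.Pairwise (· < ·) →
    ∀ i (h : i < row.length),
      (row.get ⟨i, h⟩ < x ↔ i < row.countP (fun v => decide (v < x))) := by
  intro row
  induction row with
  | nil => intro _ i h; simp at h
  | cons y r ih =>
    intro hs i h
    by_cases hyx : y < x
    · have hc : (y :: r).countP (fun v => decide (v < x))
          = r.countP (fun v => decide (v < x)) + 1 := by
        rw [List.countP_cons]; simp [hyx]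
      cases i with
      | zero => simp [hc, hyx]
      | succ j =>
        have h' : j < r.length := by simpa using h
        have := ih hs.of_cons j h'
        simpa [hc] using this
    · have hc : (y :: r).countP (fun v => decide (v < x)) = 0 := by
        rw [List.countP_eq_zero]
        intro a ha
        rcases List.mem_cons.mp ha with rfl | ha'
        · simpa using hyx
        · have := (List.pairwise_cons.mp hs).1 a ha'
          simp only [decide_eq_true_eq]
          omega
      rw [hc]
      simp only [Nat.not_lt_zero, iff_false, not_lt]
      cases i with
      | zero => simpa using hyx
      | succ j =>
        have h' : j < r.length := by simpa using h
        have hmem : r.get ⟨j, h'⟩ ∈ r := r.get_mem _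
        have := (List.pairwise_cons.mp hs).1 _ hmem
        simp only [List.get_cons_succ]
        omega

lemma insRow_eq : ∀ (row : List ℕ) (x : ℕ), row.Pairwise (· < ·) → x ∉ row →
    insRow row x = (row.take (row.countP (fun v => decide (v < x))) ++ x ::
      row.drop (row.countP (fun v => decide (v < x)) + 1),
      row[row.countP (fun v => decide (v < x))]?)
  | [], x, _, _ => by simp [insRow]
  | y :: r, x, hs, hx => by
    by_cases hyx : y < x
    · have hle : y ≤ x := le_of_lt hyx
      have ih := insRow_eq r x hs.of_cons (by simp at hx; tauto)
      have hc : (y :: r).countP (fun v => decide (v < x))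
          = r.countP (fun v => decide (v < x)) + 1 := by
        rw [List.countP_cons]; simp [hyx]
      simp only [insRow, if_pos hle, ih, hc]
      simp [List.take_succ_cons, List.drop_succ_cons, List.getElem?_cons_succ]
    · have hle : ¬ (y ≤ x) := by
        intro hc
        rcases Nat.lt_or_ge x y with h | h
        · omega
        · have : x = y := by omega
          exact hx (this ▸ List.mem_cons_self)
      have hc : (y :: r).countP (fun v => decide (v < x)) = 0 := by
        rw [List.countP_eq_zero]
        intro a ha
        rcases List.mem_cons.mp ha with rfl | ha'
        · simpa using hyx
        · have := (List.pairwise_cons.mp hs).1 a ha'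
          simp only [decide_eq_true_eq]
          omega
      simp [insRow, hle, hc]

lemma bstep_acc : ∀ (l : List ℕ) (r bs : List ℕ),
    l.foldl bstep (r, bs) = ((l.foldl bstep (r, [])).1, bs ++ (l.foldl bstep (r, [])).2)
  | [], r, bs => by simp
  | x :: l, r, bs => by
    simp only [List.foldl_cons, bstep]
    rw [bstep_acc l _ (bs ++ _), bstep_acc l _ ([] ++ _)]
    simp

lemma foldl_insTab_decomp : ∀ (l : List ℕ) (r : List ℕ) (rs : List (List ℕ)),
    l.foldl insTab (r :: rs) =
      (l.foldl bstep (r, [])).1 :: ((l.foldl bstep (r, [])).2).foldl insTab rs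
  | [], r, rs => rfl
  | x :: l, r, rs => by
    simp only [List.foldl_cons]
    cases h : insRow r x with
    | mk r' o =>
      cases o with
      | none =>
        have h1 : insTab (r :: rs) x = r' :: rs := by simp [insTab, h]
        have h2 : bstep (r, []) x = (r', []) := by simp [bstep, h]
        rw [h1, h2, foldl_insTab_decomp l r' rs]
      | some y =>
        have h1 : insTab (r :: rs) x = r' :: insTab rs y := by simp [insTab, h]
        have h2 : bstep (r, []) x = (r', [y]) := by simp [bstep, h]
        rw [h1, h2, foldl_insTab_decomp l r' (insTab rs y), bstep_acc l r' [y]]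
        rfl

lemma RS_decomp (l : List ℕ) (hl : l ≠ []) :
    RSinsertion l = (l.foldl bstep ([], [])).1 :: RSinsertion ((l.foldl bstep ([], [])).2) := by
  cases l with
  | nil => exact absurd rfl hl
  | cons x xs =>
    show (x :: xs).foldl insTab [] = _
    have h0 : insTab [] x = [[x]] := rfl
    have hb : bstep ([], []) x = ([x], []) := rfl
    simp only [List.foldl_cons, h0, hb]
    rw [foldl_insTab_decomp xs [x] []]
    rfl
noncomputable def level (P : Finset (ℕ × ℕ)) (p : ℕ × ℕ) : ℕ :=
  1 + ((P.filter (fun q => q.1 < p.1 ∧ q.2 < p.2)).attach.sup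
        (fun q => level P q.1))
termination_by p.1
decreasing_by exact (Finset.mem_filter.mp q.2).2.1

lemma level_eq (P : Finset (ℕ × ℕ)) (p : ℕ × ℕ) :
    level P p = 1 + (P.filter (fun q => q.1 < p.1 ∧ q.2 < p.2)).sup (level P) := by
  rw [level, Finset.sup_attach]

lemma level_pos (P : Finset (ℕ × ℕ)) (p : ℕ × ℕ) : 1 ≤ level P p := by
  rw [level_eq]; omega

lemma level_lt_of_sw {P : Finset (ℕ × ℕ)} {p q : ℕ × ℕ} (hq : q ∈ P)
    (h1 : q.1 < p.1) (h2 : q.2 < p.2) : level P q < level P p := by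
  conv_rhs => rw [level_eq]
  have hmem : q ∈ P.filter (fun q => q.1 < p.1 ∧ q.2 < p.2) :=
    Finset.mem_filter.mpr ⟨hq, h1, h2⟩
  have := Finset.le_sup (f := level P) hmem
  omega

lemma exists_pred_of_level {P : Finset (ℕ × ℕ)} {p : ℕ × ℕ} (h : 2 ≤ level P p) :
    ∃ q ∈ P, q.1 < p.1 ∧ q.2 < p.2 ∧ level P q + 1 = level P p := by
  rw [level_eq] at h
  set S := P.filter (fun q => q.1 < p.1 ∧ q.2 < p.2) with hS
  have hne : S.Nonempty := by
    rcases S.eq_empty_or_nonempty with he | hne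
    · rw [he] at h; simp at h
    · exact hne
  obtain ⟨q, hq, hval⟩ := Finset.exists_mem_eq_sup S hne (level P)
  obtain ⟨hqP, hq1, hq2⟩ := Finset.mem_filter.mp hq
  exact ⟨q, hqP, hq1, hq2, by rw [level_eq P p, ← hS]; omega⟩

lemma exists_level_eq {P : Finset (ℕ × ℕ)} :
    ∀ (n : ℕ) (p : ℕ × ℕ), p ∈ P → level P p ≤ n → ∀ k, 1 ≤ k → k ≤ level P p →
      ∃ q ∈ P, q.1 ≤ p.1 ∧ q.2 ≤ p.2 ∧ level P q = k := by
  intro n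
  induction n with
  | zero => intro p hp hn; have := level_pos P p; omega
  | succ n ih =>
    intro p hp hn k h1 h2
    by_cases hk : k = level P p
    · exact ⟨p, hp, le_refl _, le_refl _, hk.symm⟩
    · have h2' : 2 ≤ level P p := by omega
      obtain ⟨q, hqP, hq1, hq2, hql⟩ := exists_pred_of_level h2'
      obtain ⟨r, hrP, hr1, hr2, hrl⟩ := ih q hqP (by omega) k h1 (by omega)
      exact ⟨r, hrP, by omega, by omega, hrl⟩

lemma snd_lt_of_same_level {P : Finset (ℕ × ℕ)} (hP : ValidP P) {p q : ℕ × ℕ}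
    (hp : p ∈ P) (hq : q ∈ P) (hlev : level P q = level P p) (h : q.1 < p.1) :
    p.2 < q.2 := by
  rcases lt_trichotomy p.2 q.2 with hc | hc | hc
  · exact hc
  · exact absurd (hP.2 p hp q hq hc) (by intro e; rw [e] at h; omega)
  · have := level_lt_of_sw hq h hc; omega

noncomputable def lineB (P : Finset (ℕ × ℕ)) (m t : ℕ) : Finset (ℕ × ℕ) :=
  P.filter (fun q => level P q = m ∧ q.1 < t)

noncomputable def nl (P : Finset (ℕ × ℕ)) (t : ℕ) : ℕ :=
  (P.filter (fun q => q.1 < t)).sup (level P)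

noncomputable def minSnd (A : Finset (ℕ × ℕ)) : ℕ := ((A.image Prod.snd).min).getD 0

noncomputable def rowA (P : Finset (ℕ × ℕ)) (t : ℕ) : List ℕ :=
  (List.range (nl P t)).map (fun m => minSnd (lineB P (m+1) t))

lemma minSnd_attained {A : Finset (ℕ × ℕ)} (h : A.Nonempty) :
    ∃ a ∈ A, a.2 = minSnd A ∧ ∀ b ∈ A, a.2 ≤ b.2 := by
  have hne : (A.image Prod.snd).Nonempty := h.image _
  obtain ⟨m, hm⟩ := Finset.min_of_nonempty hne
  have hmem : m ∈ A.image Prod.snd := Finset.mem_of_min hm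
  obtain ⟨a, ha, hav⟩ := Finset.mem_image.mp hmem
  refine ⟨a, ha, ?_, ?_⟩
  · unfold minSnd; rw [hm, hav]; rfl
  · intro b hb
    have h2 := Finset.min_le (Finset.mem_image_of_mem Prod.snd hb)
    rw [hm] at h2
    rw [hav]
    exact_mod_cast h2

lemma minSnd_le {A : Finset (ℕ × ℕ)} {b : ℕ × ℕ} (hb : b ∈ A) : minSnd A ≤ b.2 := by
  obtain ⟨a, ha, he, hle⟩ := minSnd_attained ⟨b, hb⟩
  rw [← he]; exact hle b hb

lemma line_step {P : Finset (ℕ × ℕ)} (hP : ValidP P) {m t : ℕ}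
    (h : (lineB P (m+1) t).Nonempty) (hm : 1 ≤ m) :
    (lineB P m t).Nonempty ∧ minSnd (lineB P m t) < minSnd (lineB P (m+1) t) := by
  obtain ⟨p, hp, he, _⟩ := minSnd_attained h
  obtain ⟨hpP, hpl, hpt⟩ := Finset.mem_filter.mp hp
  have h2 : 2 ≤ level P p := by omega
  obtain ⟨q, hqP, hq1, hq2, hql⟩ := exists_pred_of_level h2
  have hqline : q ∈ lineB P m t := Finset.mem_filter.mpr ⟨hqP, by omega, by omega⟩
  refine ⟨⟨q, hqline⟩, ?_⟩
  have := minSnd_le hqline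
  omega

lemma line_nonempty_iff {P : Finset (ℕ × ℕ)} {m t : ℕ} (hm : 1 ≤ m) :
    (lineB P m t).Nonempty ↔ m ≤ nl P t := by
  constructor
  · rintro ⟨p, hp⟩
    obtain ⟨hpP, hpl, hpt⟩ := Finset.mem_filter.mp hp
    have : level P p ≤ nl P t :=
      Finset.le_sup (Finset.mem_filter.mpr ⟨hpP, hpt⟩)
    omega
  · intro h
    unfold nl at h
    have hne : (P.filter (fun q => q.1 < t)).Nonempty := by
      rcases (P.filter (fun q => q.1 < t)).eq_empty_or_nonempty with he | hne
      · rw [he] at h; simp at h; omega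
      · exact hne
    obtain ⟨p, hp, hval⟩ := Finset.exists_mem_eq_sup _ hne (level P)
    obtain ⟨hpP, hpt⟩ := Finset.mem_filter.mp hp
    obtain ⟨q, hqP, hq1, _, hql⟩ := exists_level_eq (level P p) p hpP (le_refl _) m hm (by omega)
    exact ⟨q, Finset.mem_filter.mpr ⟨hqP, hql, by omega⟩⟩

lemma minSnd_lt_minSnd {P : Finset (ℕ × ℕ)} (hP : ValidP P) {t : ℕ} :
    ∀ {j i}, 1 ≤ i → i < j → (lineB P j t).Nonempty →
      minSnd (lineB P i t) < minSnd (lineB P j t) := by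
  intro j
  induction j with
  | zero => intro i h1 h2; omega
  | succ j ih =>
    intro i h1 h2 hne
    by_cases hij : i = j
    · subst hij; exact (line_step hP hne h1).2
    · have hj : 1 ≤ j := by omega
      have hstep := line_step hP hne hj
      have := ih h1 (by omega) hstep.1
      omega

lemma rowA_length (P : Finset (ℕ × ℕ)) (t : ℕ) : (rowA P t).length = nl P t := by
  simp [rowA]

lemma rowA_get (P : Finset (ℕ × ℕ)) (t : ℕ) (i : ℕ) (h : i < (rowA P t).length) :
    (rowA P t).get ⟨i, h⟩ = minSnd (lineB P (i+1) t) := by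
  simp [rowA]

lemma rowA_sorted {P : Finset (ℕ × ℕ)} (hP : ValidP P) (t : ℕ) :
    (rowA P t).Pairwise (· < ·) := by
  rw [List.pairwise_iff_get]
  intro i j hij
  rw [rowA_get, rowA_get]
  have hjl : (j : ℕ) + 1 ≤ nl P t := by
    have h2 : (j : ℕ) < nl P t := lt_of_lt_of_le j.isLt (le_of_eq (rowA_length P t))
    omega
  have hne : (lineB P ((j : ℕ)+1) t).Nonempty := (line_nonempty_iff (by omega)).mpr hjl
  exact minSnd_lt_minSnd hP (by omega) (by omega) hne

lemma level_eq_countP {P : Finset (ℕ × ℕ)} (hP : ValidP P) {p : ℕ × ℕ} (hp : p ∈ P) :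
    level P p = (rowA P p.1).countP (fun v => decide (v < p.2)) + 1 := by
  set t := p.1 with ht
  set x := p.2 with hx
  have hrs : (rowA P t).Pairwise (· < ·) := rowA_sorted hP t
  have hsup : (P.filter (fun q => q.1 < t ∧ q.2 < x)).sup (level P)
      = (rowA P t).countP (fun v => decide (v < x)) := by
    apply le_antisymm
    · apply Finset.sup_le
      intro q hq
      obtain ⟨hqP, hq1, hq2⟩ := Finset.mem_filter.mp hq
      have hm1 : 1 ≤ level P q := level_pos P q
      have hline : q ∈ lineB P (level P q) t := Finset.mem_filter.mpr ⟨hqP, rfl, hq1⟩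
      have hmle : level P q ≤ nl P t := (line_nonempty_iff hm1).mp ⟨q, hline⟩
      have hidx : level P q - 1 < (rowA P t).length := by rw [rowA_length]; omega
      have hval : (rowA P t).get ⟨level P q - 1, hidx⟩ < x := by
        rw [rowA_get]
        have he : level P q - 1 + 1 = level P q := by omega
        rw [he]
        have := minSnd_le hline
        omega
      have := (countP_sorted hrs (level P q - 1) hidx).mp hval
      omega
    · set c := (rowA P t).countP (fun v => decide (v < x)) with hc
      by_cases hc0 : c = 0
      · omega
      · have hcle : c ≤ (rowA P t).length := List.countP_le_length
        have hidx : c - 1 < (rowA P t).length := by omega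
        have hval : (rowA P t).get ⟨c-1, hidx⟩ < x :=
          (countP_sorted hrs (c-1) hidx).mpr (by omega)
        rw [rowA_get] at hval
        have hcnl : c ≤ nl P t := by rw [rowA_length] at hcle; exact hcle
        have hne : (lineB P (c-1+1) t).Nonempty :=
          (line_nonempty_iff (by omega)).mpr (by omega)
        obtain ⟨q, hq, he, _⟩ := minSnd_attained hne
        obtain ⟨hqP, hql, hqt⟩ := Finset.mem_filter.mp hq
        have hqmem : q ∈ P.filter (fun q => q.1 < t ∧ q.2 < x) :=
          Finset.mem_filter.mpr ⟨hqP, hqt, by omega⟩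
        have := Finset.le_sup (f := level P) hqmem
        omega
  rw [level_eq, hsup]
  omega
def Adj (P : Finset (ℕ × ℕ)) (q p : ℕ × ℕ) : Prop :=
  q ∈ P ∧ p ∈ P ∧ level P q = level P p ∧ q.1 < p.1 ∧
    ∀ r ∈ P, level P r = level P p → ¬(q.1 < r.1 ∧ r.1 < p.1)

noncomputable def skel (P : Finset (ℕ × ℕ)) : Finset (ℕ × ℕ) :=
  ((P ×ˢ P).filter (fun z => Adj P z.1 z.2)).image (fun z => (z.2.1, z.1.2))

lemma mem_skel {P : Finset (ℕ × ℕ)} {a : ℕ × ℕ} :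
    a ∈ skel P ↔ ∃ q p, Adj P q p ∧ a = (p.1, q.2) := by
  unfold skel
  simp only [Finset.mem_image, Finset.mem_filter, Finset.mem_product]
  constructor
  · rintro ⟨⟨q, p⟩, ⟨⟨hq, hp⟩, hadj⟩, he⟩
    exact ⟨q, p, hadj, he.symm⟩
  · rintro ⟨q, p, hadj, he⟩
    exact ⟨(q, p), ⟨⟨hadj.1, hadj.2.1⟩, hadj⟩, he.symm⟩

lemma adj_unique_pred {P : Finset (ℕ × ℕ)} (hP : ValidP P) {q q' p : ℕ × ℕ}
    (h : Adj P q p) (h' : Adj P q' p) : q = q' := by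
  obtain ⟨hq, hp, hl, h1, hb⟩ := h
  obtain ⟨hq', _, hl', h1', hb'⟩ := h'
  have e1 := hb q' hq' hl'
  have e2 := hb' q hq hl
  exact hP.1 q hq q' hq' (by omega)

lemma adj_unique_succ {P : Finset (ℕ × ℕ)} (hP : ValidP P) {q p p' : ℕ × ℕ}
    (h : Adj P q p) (h' : Adj P q p') : p = p' := by
  obtain ⟨hq, hp, hl, h1, hb⟩ := h
  obtain ⟨_, hp', hl', h1', hb'⟩ := h'
  have e1 := hb' p hp (by omega)
  have e2 := hb p' hp' (by omega)
  exact hP.1 p hp p' hp' (by omega)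

lemma adj_of_pred {P : Finset (ℕ × ℕ)} (hP : ValidP P) {p : ℕ × ℕ} (hp : p ∈ P)
    (hne : (lineB P (level P p) p.1).Nonempty) :
    ∃ q, Adj P q p ∧ q.2 = minSnd (lineB P (level P p) p.1) := by
  obtain ⟨q, hq, he, hmin⟩ := minSnd_attained hne
  obtain ⟨hqP, hql, hqt⟩ := Finset.mem_filter.mp hq
  refine ⟨q, ⟨hqP, hp, hql, hqt, ?_⟩, he⟩
  rintro r hr hrl ⟨hr1, hr2⟩
  have hrline : r ∈ lineB P (level P p) p.1 := Finset.mem_filter.mpr ⟨hr, hrl, hr2⟩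
  have hlt : r.2 < q.2 := by
    have := snd_lt_of_same_level hP hr hqP (by omega) hr1
    omega
  have := hmin r hrline
  omega

lemma adj_minSnd {P : Finset (ℕ × ℕ)} (hP : ValidP P) {q p : ℕ × ℕ}
    (h : Adj P q p) :
    (lineB P (level P p) p.1).Nonempty ∧ q.2 = minSnd (lineB P (level P p) p.1) := by
  obtain ⟨hq, hp, hl, h1, hb⟩ := h
  have hqline : q ∈ lineB P (level P p) p.1 := Finset.mem_filter.mpr ⟨hq, hl, h1⟩
  refine ⟨⟨q, hqline⟩, le_antisymm ?_ (minSnd_le hqline)⟩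
  obtain ⟨a, ha, hae, hamin⟩ := minSnd_attained ⟨q, hqline⟩
  obtain ⟨haP, hal, hat⟩ := Finset.mem_filter.mp ha
  rw [← hae]
  rcases lt_trichotomy a.1 q.1 with hc | hc | hc
  · have := snd_lt_of_same_level hP hq haP (by omega) hc
    omega
  · have : a = q := hP.1 a haP q hq hc
    rw [this]
  · exact absurd ⟨hc, hat⟩ (hb a haP hal)

lemma validP_skel {P : Finset (ℕ × ℕ)} (hP : ValidP P) : ValidP (skel P) := by
  constructor
  · intro a ha b hb he
    obtain ⟨q, p, hadj, rfl⟩ := mem_skel.mp ha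
    obtain ⟨q', p', hadj', rfl⟩ := mem_skel.mp hb
    simp only at he
    have : p = p' := hP.1 p hadj.2.1 p' hadj'.2.1 he
    subst this
    have : q = q' := adj_unique_pred hP hadj hadj'
    rw [this]
  · intro a ha b hb he
    obtain ⟨q, p, hadj, rfl⟩ := mem_skel.mp ha
    obtain ⟨q', p', hadj', rfl⟩ := mem_skel.mp hb
    simp only at he
    have : q = q' := hP.2 q hadj.1 q' hadj'.1 he
    subst this
    have : p = p' := adj_unique_succ hP hadj hadj'
    rw [this]

lemma skel_card_lt {P : Finset (ℕ × ℕ)} (hP : ValidP P) (h : P.Nonempty) :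
    (skel P).card < P.card := by
  have hfst : ((P.image Prod.fst)).Nonempty := h.image _
  set m0 := (P.image Prod.fst).min' hfst with hm0
  have hsub : (skel P).image Prod.fst ⊆ (P.image Prod.fst).erase m0 := by
    intro a ha
    obtain ⟨b, hb, rfl⟩ := Finset.mem_image.mp ha
    obtain ⟨q, p, hadj, rfl⟩ := mem_skel.mp hb
    simp only
    rw [Finset.mem_erase]
    constructor
    · have hqm : m0 ≤ q.1 := Finset.min'_le _ _ (Finset.mem_image_of_mem _ hadj.1)
      have := hadj.2.2.2.1
      omega
    · exact Finset.mem_image_of_mem _ hadj.2.1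
  have hinj : Set.InjOn Prod.fst ((skel P) : Set (ℕ × ℕ)) := by
    intro a ha b hb he
    exact (validP_skel hP).1 a (by exact_mod_cast ha) b (by exact_mod_cast hb) he
  have h1 : (skel P).card = ((skel P).image Prod.fst).card :=
    (Finset.card_image_of_injOn hinj).symm
  have h2 : ((P.image Prod.fst).erase m0).card < (P.image Prod.fst).card :=
    Finset.card_erase_lt_of_mem (Finset.min'_mem _ _)
  have h3 := Finset.card_le_card hsub
  have h4 : (P.image Prod.fst).card ≤ P.card := Finset.card_image_le
  omega
lemma map_range_set (n c : ℕ) (f : ℕ → ℕ) (x : ℕ) :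
    (List.range n).map (fun i => if i = c then x else f i)
      = ((List.range n).map f).set c x := by
  apply List.ext_getElem
  · simp
  · intro i h1 h2
    simp only [List.getElem_map, List.getElem_range, List.getElem_set]
    by_cases hic : i = c
    · simp [hic]
    · rw [if_neg hic, if_neg (fun h => hic h.symm)]

lemma minSnd_insert {A : Finset (ℕ × ℕ)} {p : ℕ × ℕ} (h : ∀ a ∈ A, p.2 ≤ a.2) :
    minSnd (insert p A) = p.2 := by
  have hne : (insert p A).Nonempty := ⟨p, Finset.mem_insert_self _ _⟩
  obtain ⟨a, ha, hae, hamin⟩ := minSnd_attained hne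
  rw [← hae]
  rcases Finset.mem_insert.mp ha with rfl | ha'
  · rfl
  · exact le_antisymm (hamin p (Finset.mem_insert_self _ _)) (h a ha')

lemma x_not_mem_rowA {P : Finset (ℕ × ℕ)} (hP : ValidP P) {p : ℕ × ℕ}
    (hp : p ∈ P) {t : ℕ} (hpt : t ≤ p.1) : p.2 ∉ rowA P t := by
  intro hmem
  obtain ⟨i, hi⟩ := List.get_of_mem hmem
  rw [rowA_get] at hi
  have hne : (lineB P ((i : ℕ)+1) t).Nonempty := by
    refine (line_nonempty_iff (by omega)).mpr ?_
    have h2 : (i : ℕ) < nl P t := lt_of_lt_of_le i.isLt (le_of_eq (rowA_length P t))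
    omega
  obtain ⟨a, ha, hae, _⟩ := minSnd_attained hne
  obtain ⟨haP, hal, hat⟩ := Finset.mem_filter.mp ha
  have : a = p := hP.2 a haP p hp (by omega)
  subst this
  omega

lemma nl_mono {P : Finset (ℕ × ℕ)} {t t' : ℕ} (h : t ≤ t') : nl P t ≤ nl P t' := by
  apply Finset.sup_mono
  intro a ha
  obtain ⟨h1, h2⟩ := Finset.mem_filter.mp ha
  exact Finset.mem_filter.mpr ⟨h1, by omega⟩

lemma level_le_nl {P : Finset (ℕ × ℕ)} {q : ℕ × ℕ} (hq : q ∈ P) {t : ℕ}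
    (h : q.1 < t) : level P q ≤ nl P t :=
  Finset.le_sup (f := level P) (Finset.mem_filter.mpr ⟨hq, h⟩)

lemma invariant {P : Finset (ℕ × ℕ)} (hP : ValidP P) (t : ℕ) :
    (wordOf (P.filter (fun a => a.1 < t))).foldl bstep ([], []) =
      (rowA P t, wordOf ((skel P).filter (fun a => a.1 < t))) := by
  induction t with
  | zero =>
    have h1 : P.filter (fun a => a.1 < 0) = ∅ := by
      apply Finset.filter_false_of_mem; intro a _; omega
    have h2 : (skel P).filter (fun a => a.1 < 0) = ∅ := by
      apply Finset.filter_false_of_mem; intro a _; omega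
    have h3 : nl P 0 = 0 := by
      unfold nl
      rw [Finset.filter_false_of_mem (fun a _ => by omega)]
      simp
    rw [h1, h2]
    unfold wordOf sortF rowA
    rw [h3]
    simp
  | succ t ih =>
    by_cases hex : ∃ p ∈ P, p.1 = t
    · obtain ⟨p, hpP, hpt⟩ := hex
      have huniq : ∀ a ∈ P, a.1 = t → a = p := fun a ha h => hP.1 a ha p hpP (by omega)
      set x := p.2 with hx
      set row := rowA P t with hrowdef
      set c := row.countP (fun v => decide (v < x)) with hcdef
      have hlev : level P p = c + 1 := by
        have := level_eq_countP hP hpP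
        rw [hpt] at this
        exact this
      have hrs : row.Pairwise (· < ·) := rowA_sorted hP t
      have hxnm : x ∉ row := x_not_mem_rowA hP hpP (le_of_eq hpt.symm)
      have hclen : c ≤ row.length := List.countP_le_length
      have hrlen : row.length = nl P t := rowA_length P t
      have hins : insRow row x = (row.take c ++ x :: row.drop (c+1), row[c]?) :=
        insRow_eq row x hrs hxnm
      have hword : wordOf (P.filter (fun a => a.1 < t + 1)) =
          wordOf (P.filter (fun a => a.1 < t)) ++ [x] :=
        wordOf_filter_succ hP.1 hpP hpt
      rw [hword, List.foldl_append, ih]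
      show bstep (row, _) x = _
      unfold bstep
      simp only
      rw [hins]
      by_cases hc : c < nl P t
      · -- bumping case
        have hidx : c < row.length := by omega
        have hgetc : row.get ⟨c, hidx⟩ = minSnd (lineB P (c+1) t) := rowA_get P t c hidx
        have hxlt : x < row.get ⟨c, hidx⟩ := by
          have h1 : ¬ (row.get ⟨c, hidx⟩ < x) := by
            intro hcon
            have := (countP_sorted hrs c hidx).mp hcon
            omega
          have h2 : row.get ⟨c, hidx⟩ ≠ x := by
            intro hcon
            exact hxnm (hcon ▸ row.get_mem _)
          omega
        have hlineNe : (lineB P (c+1) t).Nonempty :=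
          (line_nonempty_iff (by omega)).mpr (by omega)
        have hnl : nl P (t+1) = nl P t := by
          apply le_antisymm
          · apply Finset.sup_le
            intro a ha
            obtain ⟨haP, hat⟩ := Finset.mem_filter.mp ha
            by_cases hat' : a.1 < t
            · exact level_le_nl haP hat'
            · have : a = p := huniq a haP (by omega)
              subst this
              omega
          · exact nl_mono (by omega)
        have hlineEq : ∀ k, k ≠ c + 1 → lineB P k (t+1) = lineB P k t := by
          intro k hk
          unfold lineB
          apply Finset.filter_congr
          intro a haP
          constructor
          · rintro ⟨h1, h2⟩
            refine ⟨h1, ?_⟩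
            by_cases hat' : a.1 < t
            · exact hat'
            · have : a = p := huniq a haP (by omega)
              subst this
              rw [hlev] at h1
              omega
          · rintro ⟨h1, h2⟩
            exact ⟨h1, by omega⟩
        have hlineIns : lineB P (c+1) (t+1) = insert p (lineB P (c+1) t) := by
          unfold lineB
          ext a
          simp only [Finset.mem_insert, Finset.mem_filter]
          constructor
          · rintro ⟨haP, h1, h2⟩
            by_cases hat' : a.1 < t
            · exact Or.inr ⟨haP, h1, hat'⟩
            · exact Or.inl (huniq a haP (by omega))
          · rintro (rfl | ⟨haP, h1, h2⟩)
            · exact ⟨hpP, hlev, by omega⟩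
            · exact ⟨haP, h1, by omega⟩
        have hminIns : minSnd (lineB P (c+1) (t+1)) = x := by
          rw [hlineIns]
          apply minSnd_insert
          intro a ha
          have := minSnd_le ha
          rw [← hgetc] at this
          omega
        have hrow1 : rowA P (t+1) = row.take c ++ x :: row.drop (c+1) := by
          show (List.range (nl P (t+1))).map (fun m => minSnd (lineB P (m+1) (t+1))) = _
          rw [hnl]
          have hmapeq : (List.range (nl P t)).map (fun m => minSnd (lineB P (m+1) (t+1)))
              = (List.range (nl P t)).map (fun i => if i = c then x
                  else minSnd (lineB P (i+1) t)) := by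
            apply List.map_congr_left
            intro i hi
            by_cases hic : i = c
            · rw [if_pos hic, hic]
              exact hminIns
            · rw [if_neg hic, hlineEq (i+1) (by omega)]
          rw [hmapeq, map_range_set]
          have hrid : (List.range (nl P t)).map (fun i => minSnd (lineB P (i+1) t))
              = row := rfl
          rw [hrid]
          exact List.set_eq_take_cons_drop x (by omega)
        have hlineNe' : (lineB P (level P p) p.1).Nonempty := by
          rw [hlev, hpt]; exact hlineNe
        obtain ⟨q, hadj, hq2⟩ := adj_of_pred hP hpP hlineNe'
        have he1 : (p.1, q.2) ∈ skel P := mem_skel.mpr ⟨q, p, hadj, rfl⟩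
        have heuniq : ∀ a ∈ skel P, a.1 = t → a = (p.1, q.2) := by
          intro a ha hat
          obtain ⟨q', p', hadj', rfl⟩ := mem_skel.mp ha
          simp only at hat
          have hpp : p' = p := huniq p' hadj'.2.1 hat
          subst hpp
          have : q' = q := adj_unique_pred hP hadj' hadj
          rw [this]
        have hskelword : wordOf ((skel P).filter (fun a => a.1 < t + 1)) =
            wordOf ((skel P).filter (fun a => a.1 < t)) ++ [(p.1, q.2).2] :=
          wordOf_filter_succ (validP_skel hP).1 he1 hpt
        have hq2' : q.2 = row.get ⟨c, hidx⟩ := by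
          rw [hq2, hlev, hpt, hgetc]
        have hgetE : row[c]? = some (row.get ⟨c, hidx⟩) := by
          rw [List.getElem?_eq_getElem hidx]
          rfl
        rw [hrow1, hskelword, hgetE, hq2']
        rfl
      · -- new line case
        have hceq : c = nl P t := by omega
        have hgetN : row[c]? = none := by
          apply List.getElem?_eq_none
          omega
        have htake : row.take c = row := List.take_of_length_le (by omega)
        have hdrop : row.drop (c+1) = [] := List.drop_eq_nil_of_le (by omega)
        have hnl' : nl P (t+1) = nl P t + 1 := by
          apply le_antisymm
          · apply Finset.sup_le
            intro a ha
            obtain ⟨haP, hat⟩ := Finset.mem_filter.mp ha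
            by_cases hat' : a.1 < t
            · have := level_le_nl haP hat'; omega
            · have : a = p := huniq a haP (by omega)
              subst this
              omega
          · have : level P p ≤ nl P (t+1) :=
              level_le_nl hpP (by omega)
            omega
        have hlineEq : ∀ k, k ≠ c + 1 → lineB P k (t+1) = lineB P k t := by
          intro k hk
          unfold lineB
          apply Finset.filter_congr
          intro a haP
          constructor
          · rintro ⟨h1, h2⟩
            refine ⟨h1, ?_⟩
            by_cases hat' : a.1 < t
            · exact hat'
            · have : a = p := huniq a haP (by omega)
              subst this
              rw [hlev] at h1
              omega
          · rintro ⟨h1, h2⟩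
            exact ⟨h1, by omega⟩
        have hlineSing : lineB P (c+1) (t+1) = {p} := by
          unfold lineB
          ext a
          simp only [Finset.mem_singleton, Finset.mem_filter]
          constructor
          · rintro ⟨haP, h1, h2⟩
            by_cases hat' : a.1 < t
            · have := level_le_nl haP hat'
              omega
            · exact huniq a haP (by omega)
          · rintro rfl
            exact ⟨hpP, hlev, by omega⟩
        have hminSing : minSnd (lineB P (c+1) (t+1)) = x := by
          rw [hlineSing]
          have : ({p} : Finset (ℕ × ℕ)) = insert p ∅ := rfl
          rw [this]
          apply minSnd_insert
          intro a ha
          simp at ha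
        have hrowB : rowA P (t+1) = row ++ [x] := by
          show (List.range (nl P (t+1))).map (fun m => minSnd (lineB P (m+1) (t+1))) = _
          rw [hnl', List.range_succ, List.map_append]
          congr 1
          · have hmapeq : (List.range (nl P t)).map (fun m => minSnd (lineB P (m+1) (t+1)))
                = (List.range (nl P t)).map (fun i => minSnd (lineB P (i+1) t)) := by
              apply List.map_congr_left
              intro i hi
              rw [hlineEq (i+1) (by simp at hi; omega)]
            rw [hmapeq]
            rfl
          · show [minSnd (lineB P (nl P t + 1) (t+1))] = [x]
            rw [← hceq, hminSing]
        have hnone : ∀ a ∈ skel P, a.1 ≠ t := by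
          intro a ha hat
          obtain ⟨q', p', hadj', rfl⟩ := mem_skel.mp ha
          simp only at hat
          have hpp : p' = p := huniq p' hadj'.2.1 hat
          have hlq : level P q' = level P p := by rw [← hpp]; exact hadj'.2.2.1
          have hq1 : q'.1 < p.1 := by rw [← hpp]; exact hadj'.2.2.2.1
          have := level_le_nl hadj'.1 (t := t) (by omega)
          omega
        have hskelword : wordOf ((skel P).filter (fun a => a.1 < t + 1)) =
            wordOf ((skel P).filter (fun a => a.1 < t)) :=
          wordOf_filter_succ_of_not hnone
        rw [hrowB, hskelword, hgetN, htake, hdrop]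
        simp
    · -- no point at time t
      have hnopt : ∀ a ∈ P, a.1 ≠ t := fun a ha h => hex ⟨a, ha, h⟩
      have hword : wordOf (P.filter (fun a => a.1 < t + 1)) =
          wordOf (P.filter (fun a => a.1 < t)) :=
        wordOf_filter_succ_of_not hnopt
      have hfe : P.filter (fun a => a.1 < t + 1) = P.filter (fun a => a.1 < t) := by
        apply Finset.filter_congr
        intro a haP
        have := hnopt a haP
        omega
      have hnl : nl P (t+1) = nl P t := by
        unfold nl
        rw [hfe]
      have hline : ∀ k, lineB P k (t+1) = lineB P k t := by
        intro k
        unfold lineB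
        apply Finset.filter_congr
        intro a haP
        have := hnopt a haP
        omega
      have hrow : rowA P (t+1) = rowA P t := by
        unfold rowA
        rw [hnl]
        apply List.map_congr_left
        intro i hi
        rw [hline]
      have hnone : ∀ a ∈ skel P, a.1 ≠ t := by
        intro a ha hat
        obtain ⟨q', p', hadj', rfl⟩ := mem_skel.mp ha
        simp only at hat
        exact hnopt p' hadj'.2.1 hat
      have hskelword : wordOf ((skel P).filter (fun a => a.1 < t + 1)) =
          wordOf ((skel P).filter (fun a => a.1 < t)) :=
        wordOf_filter_succ_of_not hnone
      rw [hword, hskelword, hrow, ih]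
lemma validP_swap {P : Finset (ℕ × ℕ)} (hP : ValidP P) : ValidP (P.image Prod.swap) := by
  constructor
  · intro a ha b hb he
    obtain ⟨a', ha', rfl⟩ := Finset.mem_image.mp ha
    obtain ⟨b', hb', rfl⟩ := Finset.mem_image.mp hb
    have : a' = b' := hP.2 a' ha' b' hb' he
    rw [this]
  · intro a ha b hb he
    obtain ⟨a', ha', rfl⟩ := Finset.mem_image.mp ha
    obtain ⟨b', hb', rfl⟩ := Finset.mem_image.mp hb
    have : a' = b' := hP.1 a' ha' b' hb' he
    rw [this]

lemma image_swap_swap (P : Finset (ℕ × ℕ)) : (P.image Prod.swap).image Prod.swap = P := by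
  rw [Finset.image_image]
  have : (Prod.swap ∘ Prod.swap : ℕ × ℕ → ℕ × ℕ) = id := by
    funext a; simp
  rw [this, Finset.image_id]

lemma level_swap_aux (P : Finset (ℕ × ℕ)) :
    ∀ (n : ℕ) (p : ℕ × ℕ), p.1 < n →
      level (P.image Prod.swap) p.swap = level P p := by
  intro n
  induction n with
  | zero => intro p h; omega
  | succ n ih =>
    intro p hp
    rw [level_eq, level_eq]
    congr 1
    have hfil : (P.image Prod.swap).filter (fun q => q.1 < p.swap.1 ∧ q.2 < p.swap.2)
        = (P.filter (fun q => q.1 < p.1 ∧ q.2 < p.2)).image Prod.swap := by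
      ext a
      simp only [Finset.mem_filter, Finset.mem_image]
      constructor
      · rintro ⟨⟨b, hb, rfl⟩, h1, h2⟩
        exact ⟨b, ⟨hb, by simpa using h2, by simpa using h1⟩, rfl⟩
      · rintro ⟨b, ⟨hb, h1, h2⟩, rfl⟩
        exact ⟨⟨b, hb, rfl⟩, by simpa using h2, by simpa using h1⟩
    rw [hfil, Finset.sup_image]
    apply Finset.sup_congr rfl
    intro b hb
    obtain ⟨hbP, hb1, hb2⟩ := Finset.mem_filter.mp hb
    show level (P.image Prod.swap) b.swap = level P b
    exact ih b (by omega)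

lemma level_swap (P : Finset (ℕ × ℕ)) (p : ℕ × ℕ) :
    level (P.image Prod.swap) p.swap = level P p :=
  level_swap_aux P (p.1 + 1) p (by omega)

lemma fst_lt_iff_snd_gt {P : Finset (ℕ × ℕ)} (hP : ValidP P) {p q : ℕ × ℕ}
    (hp : p ∈ P) (hq : q ∈ P) (hlev : level P q = level P p) (hne : q ≠ p) :
    q.1 < p.1 ↔ p.2 < q.2 := by
  constructor
  · exact snd_lt_of_same_level hP hp hq hlev
  · intro h
    rcases lt_trichotomy q.1 p.1 with hc | hc | hc
    · exact hc
    · exact absurd (hP.1 q hq p hp hc) hne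
    · have := snd_lt_of_same_level hP hq hp hlev.symm hc
      omega

lemma adj_swap {P : Finset (ℕ × ℕ)} (hP : ValidP P) {q p : ℕ × ℕ}
    (h : Adj P q p) : Adj (P.image Prod.swap) p.swap q.swap := by
  obtain ⟨hq, hp, hl, h1, hb⟩ := h
  have hne : q ≠ p := by intro e; rw [e] at h1; omega
  have hsnd : p.2 < q.2 := (fst_lt_iff_snd_gt hP hp hq hl hne).mp h1
  refine ⟨Finset.mem_image_of_mem _ hp, Finset.mem_image_of_mem _ hq, ?_, ?_, ?_⟩
  · rw [level_swap, level_swap]; omega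
  · simpa using hsnd
  · rintro r' hr' hrl ⟨hr1, hr2⟩
    obtain ⟨r, hrP, rfl⟩ := Finset.mem_image.mp hr'
    rw [level_swap, level_swap] at hrl
    have hp2 : p.2 < r.2 := by simpa using hr1
    have hq2 : r.2 < q.2 := by simpa using hr2
    have hrnp : r ≠ p := by intro e; rw [e] at hp2; omega
    have hrnq : q ≠ r := by intro e; rw [e] at hq2; omega
    have hra : r.1 < p.1 :=
      (fst_lt_iff_snd_gt hP hp hrP (by omega) hrnp).mpr hp2
    have hrb : q.1 < r.1 :=
      (fst_lt_iff_snd_gt hP hrP hq (by omega) hrnq).mpr hq2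
    exact hb r hrP (by omega) ⟨hrb, hra⟩

lemma skel_swap {P : Finset (ℕ × ℕ)} (hP : ValidP P) :
    skel (P.image Prod.swap) = (skel P).image Prod.swap := by
  ext a
  rw [mem_skel, Finset.mem_image]
  constructor
  · rintro ⟨q', p', hadj, rfl⟩
    obtain ⟨qq, hqq, rfl⟩ := Finset.mem_image.mp hadj.1
    obtain ⟨pp, hpp, rfl⟩ := Finset.mem_image.mp hadj.2.1
    have h2 := adj_swap (validP_swap hP) hadj
    rw [image_swap_swap] at h2
    simp only [Prod.swap_swap] at h2
    refine ⟨(qq.1, pp.2), mem_skel.mpr ⟨pp, qq, h2, rfl⟩, ?_⟩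
    simp [Prod.swap]
  · rintro ⟨b, hb, rfl⟩
    obtain ⟨q, p, hadj, rfl⟩ := mem_skel.mp hb
    have h2 := adj_swap hP hadj
    exact ⟨p.swap, q.swap, h2, by simp [Prod.swap]⟩
lemma wordOf_ne_nil {P : Finset (ℕ × ℕ)} (hne : P.Nonempty) : wordOf P ≠ [] := by
  obtain ⟨a, ha⟩ := hne
  have : a ∈ sortF P := mem_sortF.mpr ha
  intro hcon
  unfold wordOf at hcon
  rw [List.map_eq_nil_iff] at hcon
  rw [hcon] at this
  simp at this

lemma shape_decomp {P : Finset (ℕ × ℕ)} (hP : ValidP P) (hne : P.Nonempty) :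
    shape (RSinsertion (wordOf P)) =
      (P.sup (level P)) :: shape (RSinsertion (wordOf (skel P))) := by
  set t0 := (P.sup Prod.fst) + 1 with ht0
  have hPf : P.filter (fun a => a.1 < t0) = P := by
    apply Finset.filter_true_of_mem
    intro a ha
    have := Finset.le_sup (f := Prod.fst) ha
    omega
  have hSf : (skel P).filter (fun a => a.1 < t0) = skel P := by
    apply Finset.filter_true_of_mem
    intro a ha
    obtain ⟨q, p, hadj, rfl⟩ := mem_skel.mp ha
    have := Finset.le_sup (f := Prod.fst) hadj.2.1
    omega
  have hinv := invariant hP t0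
  rw [hPf, hSf] at hinv
  rw [RS_decomp _ (wordOf_ne_nil hne), hinv]
  have hlen : (rowA P t0).length = P.sup (level P) := by
    rw [rowA_length]
    unfold nl
    rw [hPf]
  show (rowA P t0).length :: shape (RSinsertion (wordOf (skel P))) = _
  rw [hlen]

lemma main_aux : ∀ (N : ℕ) (P : Finset (ℕ × ℕ)), P.card ≤ N → ValidP P →
    shape (RSinsertion (wordOf (P.image Prod.swap))) = shape (RSinsertion (wordOf P)) := by
  intro N
  induction N with
  | zero =>
    intro P hc hP
    have : P = ∅ := Finset.card_eq_zero.mp (by omega)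
    subst this
    simp
  | succ N ih =>
    intro P hc hP
    rcases P.eq_empty_or_nonempty with rfl | hne
    · simp
    · have hPT : ValidP (P.image Prod.swap) := validP_swap hP
      have hneT : (P.image Prod.swap).Nonempty := hne.image _
      rw [shape_decomp hP hne, shape_decomp hPT hneT]
      congr 1
      · rw [Finset.sup_image]
        apply Finset.sup_congr rfl
        intro b hb
        show level (P.image Prod.swap) b.swap = level P b
        exact level_swap P b
      · rw [skel_swap hP]
        have hcard : (skel P).card ≤ N := by
          have := skel_card_lt hP hne
          omega
        rw [ih (skel P) hcard (validP_skel hP)]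

/-- The shape of the insertion tableau produced by the Robinson–Schensted
algorithm applied to a permutation `δ ∈ S_n` equals the shape of the insertion
tableau of `δ⁻¹`. -/
theorem RS_shape_inv (n : ℕ) (δ : Equiv.Perm (Fin n)) :
    shape (RSinsertion ((List.finRange n).map fun i => ((δ i : ℕ)))) =
      shape (RSinsertion ((List.finRange n).map fun i => ((δ⁻¹ i : ℕ)))) := by
  classical
  have key : ∀ (σ : Equiv.Perm (Fin n)),
      wordOf (Finset.univ.image (fun i : Fin n => ((i : ℕ), (σ i : ℕ))))
        = (List.finRange n).map (fun i => ((σ i : ℕ))) := by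
    intro σ
    have hs : sortF (Finset.univ.image (fun i : Fin n => ((i : ℕ), (σ i : ℕ))))
        = (List.finRange n).map (fun (i : Fin n) => ((i : ℕ), (σ i : ℕ))) := by
      apply sortF_eq
      · refine List.Pairwise.map _ ?_ (List.pairwise_lt_finRange n)
        intro a b hab
        simpa using hab
      · intro a
        simp only [List.mem_map, List.mem_finRange, Finset.mem_image,
          Finset.mem_univ, true_and]
    unfold wordOf
    rw [hs, List.map_map]
    rfl
  set P := Finset.univ.image (fun i : Fin n => ((i : ℕ), (δ i : ℕ))) with hPdef
  have hswap : P.image Prod.swap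
      = Finset.univ.image (fun i : Fin n => ((i : ℕ), (δ⁻¹ i : ℕ))) := by
    ext a
    simp only [hPdef, Finset.mem_image, Finset.mem_univ, true_and]
    constructor
    · rintro ⟨b, ⟨i, rfl⟩, rfl⟩
      refine ⟨δ i, ?_⟩
      simp [Prod.swap]
    · rintro ⟨j, rfl⟩
      refine ⟨((δ⁻¹ j : ℕ), (j : ℕ)), ⟨δ⁻¹ j, ?_⟩, rfl⟩
      simp
  have hValid : ValidP P := by
    constructor
    · intro a ha b hb he
      obtain ⟨i, _, rfl⟩ := Finset.mem_image.mp ha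
      obtain ⟨j, _, rfl⟩ := Finset.mem_image.mp hb
      simp only at he
      have : i = j := Fin.ext he
      rw [this]
    · intro a ha b hb he
      obtain ⟨i, _, rfl⟩ := Finset.mem_image.mp ha
      obtain ⟨j, _, rfl⟩ := Finset.mem_image.mp hb
      simp only at he
      have : i = j := δ.injective (Fin.ext he)
      rw [this]
  have h := main_aux P.card P le_rfl hValid
  rw [hswap, key δ⁻¹, key δ] at h
  exact h.symm
end

section
/- In the Weyl group W of type C_n or D_n realized as signed permutations, let α = ε_{−i} − ε_{−i+1} be a simple short root with reflection s_α, and let w ∈ W with v = w⁻¹. If v(i−1) > v(i+1) > v(i) > 0 (for −n < i < −1), then α ∈ τ(v) and there exists a simple root β = ε_{−i−1} − ε_{−i} with v·β a positive root but (v s_α)·β not a positive root; hence τ(v s_α) ⊄ τ(v). -/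
/-- `IsPosRoot a b` : the short root `ε_a − ε_b` (indices in `ℤ \ {0}`, with the
convention `ε_{−c} = −ε_c`) belongs to the fixed set of positive roots
`Δ⁺ = {−ε_i ± ε_j : i > j > 0}` of type `C`/`D`. -/
def IsPosRoot (a b : ℤ) : Prop :=
  (0 < a ∧ 0 < b ∧ a < b) ∨ (a < 0 ∧ 0 < b ∧ b < -a) ∨ (a < 0 ∧ b < 0 ∧ a < b)

/-- In the Weyl group of type `C_n`/`D_n` realized as signed permutations, let
`α = ε_{−i} − ε_{−i+1}` with reflection `s_α`, and `v = w⁻¹`.  If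
`v(i−1) > v(i+1) > v(i) > 0` (for `−n < i < −1`), then `α ∈ τ(v)` (i.e. `v·α`
is not positive), and for the simple root `β = ε_{−i−1} − ε_{−i}` one has
`v·β ∈ Δ⁺` but `(v s_α)·β ∉ Δ⁺`; hence `τ(v s_α) ⊄ τ(v)`.  (Here
`s_α` swaps the indices `−i ↔ −(i−1)`, so `s_α·β = ε_{−(i+1)} − ε_{−(i−1)}`,
and `v` acts on roots by `v·(ε_a − ε_b) = ε_{v(a)} − ε_{v(b)}`.) -/
theorem tau_not_subset_of_inequality
    (n : ℕ) (v : ℤ → ℤ)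
    (hbij : Set.BijOn v {j : ℤ | j ≠ 0 ∧ |j| ≤ (n : ℤ)} {j : ℤ | j ≠ 0 ∧ |j| ≤ (n : ℤ)})
    (hodd : ∀ j, v (-j) = - v j)
    (i : ℤ) (hi1 : -(n : ℤ) < i) (hi2 : i < -1)
    (h1 : v (i + 1) < v (i - 1)) (h2 : v i < v (i + 1)) (h3 : 0 < v i) :
    ¬ IsPosRoot (v (-i)) (v (-(i - 1))) ∧
      IsPosRoot (v (-(i + 1))) (v (-i)) ∧
      ¬ IsPosRoot (v (-(i + 1))) (v (-(i - 1))) := by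
  unfold IsPosRoot
  rw [hodd i, hodd (i-1), hodd (i+1)]
  omega
end
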